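/- The pseudohyperbolic metric on the unit ball satisfies the strengthened triangle inequality: for z₁, z₂, w ∈ B_n, | |φ_{z₁}(w)| - |φ_{z₂}(w)| | ≤ ρ(z₁,z₂) · (1 - |φ_{z₁}(w)||φ_{z₂}(w)|). -/

import Mathlib

open MeasureTheory Metric Complex Filter

noncomputable section

/-- `ℂⁿ` as a Hilbert space. -/
abbrev Cn (n : ℕ) := EuclideanSpace ℂ (Fin n)

/-- The Hermitian inner product `⟨z,w⟩ = Σ zᵢ conj(wᵢ)` (as in the paper). -/
def herm {n : ℕ} (z w : Cn n) : ℂ := inner ℂ w z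

/- The involutive Möbius automorphism `φ_z` of the unit ball with `φ_z(0) = z`,
given by the standard explicit formula `φ_z(w) = (z - P_z w - s_z Q_z w)/(1 - ⟨w,z⟩)`. -/
open Classical in
def mobius {n : ℕ} (z w : Cn n) : Cn n :=
  if z = 0 then -w else
    (1 - herm w z)⁻¹ •
      ((z - (herm w z / herm z z) • z) -
        (Real.sqrt (1 - ‖z‖ ^ 2) : ℂ) • (w - (herm w z / herm z z) • z))

/-- The pseudohyperbolic metric `ρ(z,w) = |φ_z(w)|`. -/
def prho {n : ℕ} (z w : Cn n) : ℝ := ‖mobius z w‖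

/-- The hyperbolic (Bergman) metric `β(z,w) = (1/2) log((1+ρ)/(1-ρ))`. -/
def hbeta {n : ℕ} (z w : Cn n) : ℝ :=
  (1 / 2) * Real.log ((1 + prho z w) / (1 - prho z w))

lemma herm_conj {n} (z w : Cn n) : herm z w = starRingEnd ℂ (herm w z) := by
  rw [herm, herm, ← inner_conj_symm]

lemma herm_self {n} (z : Cn n) : herm z z = ((‖z‖ ^ 2 : ℝ) : ℂ) := by
  simp [herm, inner_self_eq_norm_sq_to_K]

lemma norm_one_sub_herm_symm {n} (z w : Cn n) :
    ‖(1 : ℂ) - herm z w‖ = ‖(1 : ℂ) - herm w z‖ := by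
  rw [herm_conj z w, show (1:ℂ) - starRingEnd ℂ (herm w z) = starRingEnd ℂ (1 - herm w z) by
    rw [map_sub, map_one]]
  exact norm_star _

lemma mul_conj_one_sub_herm {n} (z w : Cn n) :
    ((1 : ℂ) - herm w z) * ((1 : ℂ) - herm z w) = ((‖(1:ℂ) - herm w z‖ ^ 2 : ℝ) : ℂ) := by
  rw [herm_conj z w, show (1:ℂ) - starRingEnd ℂ (herm w z) = starRingEnd ℂ (1 - herm w z) by
    rw [map_sub, map_one]]
  rw [Complex.mul_conj]
  norm_cast
  rw [← Complex.sq_norm]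

lemma norm_herm_le {n} (z w : Cn n) : ‖herm z w‖ ≤ ‖z‖ * ‖w‖ := by
  simpa [herm, mul_comm] using norm_inner_le_norm (𝕜 := ℂ) w z

lemma one_sub_herm_ne {n} {z w : Cn n} (hz : ‖z‖ < 1) (hw : ‖w‖ < 1) :
    (1 : ℂ) - herm z w ≠ 0 := by
  intro h
  have h1 : herm z w = 1 := by linear_combination -h
  have := norm_herm_le z w
  rw [h1] at this
  simp at this
  nlinarith [norm_nonneg z, norm_nonneg w]


lemma scalar_key (A S p u r : ℂ) (hA : A ≠ 0) (hu : (1:ℂ) - u ≠ 0) (hp : (1:ℂ) - p ≠ 0)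
    (hS : S ^ 2 = 1 - A) :
    (1 - p)⁻¹ *
      ((1 - u)⁻¹ * (A - u / A * A - S * (u - u / A * A)) -
        p / A * ((1 - u)⁻¹ * (A - u / A * A - S * (u - u / A * A))) -
        S *
          ((1 - u)⁻¹ * (p - u / A * p - S * (r - u / A * p)) -
            p / A * ((1 - u)⁻¹ * (A - u / A * A - S * (u - u / A * A))))) =
    (1 - p)⁻¹ * ((1 - u)⁻¹ * (A - p - u + p * u + (1 - A) * r)) := by
  rw [div_mul_cancel₀ u hA]
  field_simp
  linear_combination (A * r - p * u) * hS

lemma star_id {n} (a z w : Cn n) (ha : ‖a‖ < 1) (hz : ‖z‖ < 1) (hw : ‖w‖ < 1) :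
    (1 - herm (mobius a z) (mobius a w)) * ((1 - herm z a) * (1 - herm a w)) =
      (1 - (‖a‖ : ℂ) ^ 2) * (1 - herm z w) := by
  rcases eq_or_ne a 0 with rfl | ha0
  · simp [mobius, herm]
  · have hA : herm a a = (‖a‖ : ℂ) ^ 2 := by
      simp [herm, inner_self_eq_norm_sq_to_K]
    have hAne : ((‖a‖ : ℂ) ^ 2) ≠ 0 := by
      simp [norm_eq_zero, ha0]
    have h1 : (1 : ℂ) - herm z a ≠ 0 := one_sub_herm_ne hz ha
    have h2 : (1 : ℂ) - herm w a ≠ 0 := one_sub_herm_ne hw ha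
    have h2' : (1 : ℂ) - herm a w ≠ 0 := by
      rw [herm_conj a w]
      intro h
      apply h2
      have := congrArg (starRingEnd ℂ) h
      simpa using this
    have hS : ((Real.sqrt (1 - ‖a‖ ^ 2) : ℝ) : ℂ) ^ 2 = 1 - (‖a‖ : ℂ) ^ 2 := by
      rw [← Complex.ofReal_pow, Real.sq_sqrt (by nlinarith [norm_nonneg a])]
      push_cast; ring
    have hA' : (inner ℂ a a : ℂ) = (‖a‖ : ℂ) ^ 2 := hA
    have h2'' : (1 : ℂ) - inner ℂ w a ≠ 0 := h2'
    have h1' : (1 : ℂ) - inner ℂ a z ≠ 0 := h1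
    have hG : herm (mobius a z) (mobius a w) =
        (1 - (inner ℂ a z : ℂ))⁻¹ * ((1 - (inner ℂ w a : ℂ))⁻¹ *
          ((‖a‖ : ℂ) ^ 2 - inner ℂ a z - inner ℂ w a + inner ℂ a z * inner ℂ w a
            + (1 - (‖a‖ : ℂ) ^ 2) * inner ℂ w z)) := by
      simp only [mobius, if_neg ha0, herm, inner_sub_left, inner_sub_right,
        inner_smul_left, inner_smul_right]
      simp only [map_div₀, map_sub, map_inv₀, map_one, Complex.conj_ofReal, inner_conj_symm]
      rw [hA']
      set p : ℂ := inner ℂ a z with hp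
      set u : ℂ := inner ℂ w a with hu
      set r : ℂ := inner ℂ w z with hr
      set A : ℂ := (‖a‖ : ℂ) ^ 2 with hAdef
      set S : ℂ := ((Real.sqrt (1 - ‖a‖ ^ 2) : ℝ) : ℂ) with hSdef
      exact scalar_key A S p u r hAne h2'' h1' hS
    show (1 - herm (mobius a z) (mobius a w)) * ((1 - (inner ℂ a z : ℂ)) * (1 - (inner ℂ w a : ℂ)))
        = (1 - (‖a‖ : ℂ) ^ 2) * (1 - (inner ℂ w z : ℂ))
    have houter : ∀ X Y G : ℂ, X ≠ 0 → Y ≠ 0 →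
        (1 - X⁻¹ * (Y⁻¹ * G)) * (X * Y) = X * Y - G := by
      intro X Y G hX hY; field_simp
    rw [hG, houter _ _ _ h1' h2'']
    ring


lemma prho_sq_mul {n} (z w : Cn n) (hz : ‖z‖ < 1) (hw : ‖w‖ < 1) :
    (1 - prho z w ^ 2) * ‖(1:ℂ) - herm w z‖ ^ 2 = (1 - ‖z‖ ^ 2) * (1 - ‖w‖ ^ 2) := by
  have h := star_id z w w hz hw hw
  have hm : herm (mobius z w) (mobius z w) = ((‖mobius z w‖ ^ 2 : ℝ) : ℂ) := herm_self _
  rw [hm, herm_self w, mul_conj_one_sub_herm z w] at h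
  have : (((1 - prho z w ^ 2) * ‖(1:ℂ) - herm w z‖ ^ 2 : ℝ) : ℂ)
      = (((1 - ‖z‖ ^ 2) * (1 - ‖w‖ ^ 2) : ℝ) : ℂ) := by
    rw [prho]
    push_cast at h ⊢
    linear_combination h
  exact_mod_cast this

lemma norm_one_sub_herm_pos {n} (z w : Cn n) (hz : ‖z‖ < 1) (hw : ‖w‖ < 1) :
    0 < ‖(1:ℂ) - herm w z‖ :=
  norm_pos_iff.mpr (one_sub_herm_ne hw hz)

lemma prho_symm {n} (z w : Cn n) (hz : ‖z‖ < 1) (hw : ‖w‖ < 1) :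
    prho z w = prho w z := by
  have h1 := prho_sq_mul z w hz hw
  have h2 := prho_sq_mul w z hw hz
  rw [norm_one_sub_herm_symm z w] at h2
  have hN := norm_one_sub_herm_pos z w hz hw
  have hNe : ‖(1:ℂ) - herm w z‖ ^ 2 ≠ 0 := pow_ne_zero 2 hN.ne'
  have hsub : 1 - prho z w ^ 2 = 1 - prho w z ^ 2 :=
    mul_right_cancel₀ hNe (by rw [h1, h2]; ring)
  have : prho z w ^ 2 = prho w z ^ 2 := by linarith
  have e1 : prho z w = Real.sqrt (prho z w ^ 2) := (Real.sqrt_sq (norm_nonneg _)).symm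
  have e2 : prho w z = Real.sqrt (prho w z ^ 2) := (Real.sqrt_sq (norm_nonneg _)).symm
  rw [e1, e2, this]

lemma prho_lt_one {n} (z w : Cn n) (hz : ‖z‖ < 1) (hw : ‖w‖ < 1) :
    prho z w < 1 := by
  have h := prho_sq_mul z w hz hw
  have hN := norm_one_sub_herm_pos z w hz hw
  have hD : 0 < (1 - ‖z‖ ^ 2) * (1 - ‖w‖ ^ 2) :=
    mul_pos (by nlinarith [norm_nonneg z]) (by nlinarith [norm_nonneg w])
  have h2 : 0 < 1 - prho z w ^ 2 := by nlinarith [mul_pos hN hN]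
  nlinarith [norm_nonneg (mobius z w)]

/-- Strengthened triangle inequality for the pseudohyperbolic
metric: `||φ_{z₁}(w)| - |φ_{z₂}(w)|| ≤ ρ(z₁,z₂)(1 - |φ_{z₁}(w)||φ_{z₂}(w)|)`. -/
theorem prho_strong_triangle {n : ℕ} (z₁ z₂ w : Cn n)
    (hz₁ : z₁ ∈ ball (0 : Cn n) 1) (hz₂ : z₂ ∈ ball (0 : Cn n) 1)
    (hw : w ∈ ball (0 : Cn n) 1) :
    |‖mobius z₁ w‖ - ‖mobius z₂ w‖| ≤
      prho z₁ z₂ * (1 - ‖mobius z₁ w‖ * ‖mobius z₂ w‖) := by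
  rw [mem_ball_zero_iff] at hz₁ hz₂ hw
  set ρ₀ : ℝ := prho z₁ z₂ with hρ₀
  set ρ₁ : ℝ := prho z₁ w with hρ₁
  set ρ₂ : ℝ := prho z₂ w with hρ₂
  show |ρ₁ - ρ₂| ≤ ρ₀ * (1 - ρ₁ * ρ₂)
  set N₀ : ℝ := ‖(1:ℂ) - herm z₂ z₁‖ with hN₀
  set N₁ : ℝ := ‖(1:ℂ) - herm w z₁‖ with hN₁
  set N₂ : ℝ := ‖(1:ℂ) - herm w z₂‖ with hN₂
  set D₁ : ℝ := 1 - ‖z₁‖ ^ 2 with hD₁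
  set D₂ : ℝ := 1 - ‖z₂‖ ^ 2 with hD₂
  set E : ℝ := 1 - ‖w‖ ^ 2 with hE
  have hD₁p : 0 < D₁ := by nlinarith [norm_nonneg z₁]
  have hD₂p : 0 < D₂ := by nlinarith [norm_nonneg z₂]
  have hEp : 0 < E := by nlinarith [norm_nonneg w]
  have hN₀p : 0 < N₀ := norm_one_sub_herm_pos z₁ z₂ hz₁ hz₂
  have hN₁p : 0 < N₁ := norm_one_sub_herm_pos z₁ w hz₁ hw
  have hN₂p : 0 < N₂ := norm_one_sub_herm_pos z₂ w hz₂ hw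
  have h0 : (1 - ρ₀ ^ 2) * N₀ ^ 2 = D₁ * D₂ := prho_sq_mul z₁ z₂ hz₁ hz₂
  have hI1 : (1 - ρ₁ ^ 2) * N₁ ^ 2 = D₁ * E := prho_sq_mul z₁ w hz₁ hw
  have hI2 : (1 - ρ₂ ^ 2) * N₂ ^ 2 = D₂ * E := prho_sq_mul z₂ w hz₂ hw
  have hρ₁n : 0 ≤ ρ₁ := norm_nonneg _
  have hρ₂n : 0 ≤ ρ₂ := norm_nonneg _
  have hρ₀n : 0 ≤ ρ₀ := norm_nonneg _
  have hρ₁lt : ρ₁ < 1 := prho_lt_one z₁ w hz₁ hw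
  have hρ₂lt : ρ₂ < 1 := prho_lt_one z₂ w hz₂ hw
  have hmul : 0 ≤ 1 - ρ₁ * ρ₂ := by nlinarith
  -- the key inequality via star_id at w
  set u₁ : Cn n := mobius w z₁ with hu₁
  set u₂ : Cn n := mobius w z₂ with hu₂
  have hnu₁ : ‖u₁‖ = ρ₁ := (prho_symm w z₁ hw hz₁)
  have hnu₂ : ‖u₂‖ = ρ₂ := (prho_symm w z₂ hw hz₂)
  have hU := star_id w z₁ z₂ hw hz₁ hz₂
  have hUnorm : ‖(1:ℂ) - herm u₁ u₂‖ * (N₁ * N₂) = E * N₀ := by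
    have := congrArg norm hU
    simp only [norm_mul] at this
    rw [norm_one_sub_herm_symm z₁ w, norm_one_sub_herm_symm z₁ z₂] at this
    rw [show ((1:ℂ) - (‖w‖:ℂ) ^ 2) = ((1 - ‖w‖ ^ 2 : ℝ) : ℂ) by push_cast; ring] at this
    rw [Complex.norm_real, Real.norm_eq_abs, abs_of_pos hEp] at this
    rw [hu₁, hu₂]
    exact this
  clear_value ρ₀ ρ₁ ρ₂ N₀ N₁ N₂ D₁ D₂ E u₁ u₂
  have hlow : 1 - ρ₁ * ρ₂ ≤ ‖(1:ℂ) - herm u₁ u₂‖ := by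
    have hcs : ‖herm u₁ u₂‖ ≤ ρ₁ * ρ₂ := by
      have := norm_herm_le u₁ u₂
      rwa [hnu₁, hnu₂] at this
    have := norm_sub_norm_le (1 : ℂ) (herm u₁ u₂)
    simp only [norm_one] at this
    linarith
  have key : (1 - ρ₁ * ρ₂) * (N₁ * N₂) ≤ E * N₀ := by
    calc (1 - ρ₁ * ρ₂) * (N₁ * N₂) ≤ ‖(1:ℂ) - herm u₁ u₂‖ * (N₁ * N₂) :=
          mul_le_mul_of_nonneg_right hlow (by positivity)
      _ = E * N₀ := hUnorm
  have key2 : (1 - ρ₁ * ρ₂) ^ 2 * (N₁ ^ 2 * N₂ ^ 2) ≤ E ^ 2 * N₀ ^ 2 := by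
    calc (1 - ρ₁ * ρ₂) ^ 2 * (N₁ ^ 2 * N₂ ^ 2) = ((1 - ρ₁ * ρ₂) * (N₁ * N₂)) ^ 2 := by ring
      _ ≤ (E * N₀) ^ 2 := by
          apply pow_le_pow_left₀ (by positivity) key
      _ = E ^ 2 * N₀ ^ 2 := by ring
  have key3 : (1 - ρ₀ ^ 2) * (1 - ρ₁ * ρ₂) ^ 2 ≤ (1 - ρ₁ ^ 2) * (1 - ρ₂ ^ 2) := by
    have hP : (0:ℝ) < N₀ ^ 2 * (N₁ ^ 2 * N₂ ^ 2) := by positivity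
    have e1 : (1 - ρ₀ ^ 2) * (1 - ρ₁ * ρ₂) ^ 2 * (N₀ ^ 2 * (N₁ ^ 2 * N₂ ^ 2))
        = (D₁ * D₂) * ((1 - ρ₁ * ρ₂) ^ 2 * (N₁ ^ 2 * N₂ ^ 2)) := by
      rw [← h0]; ring
    have e2 : (1 - ρ₁ ^ 2) * (1 - ρ₂ ^ 2) * (N₀ ^ 2 * (N₁ ^ 2 * N₂ ^ 2))
        = (D₁ * D₂) * (E ^ 2 * N₀ ^ 2) := by
      linear_combination ((1 - ρ₂ ^ 2) * N₂ ^ 2 * N₀ ^ 2) * hI1 + (D₁ * E * N₀ ^ 2) * hI2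
    have e3 : (D₁ * D₂) * ((1 - ρ₁ * ρ₂) ^ 2 * (N₁ ^ 2 * N₂ ^ 2))
        ≤ (D₁ * D₂) * (E ^ 2 * N₀ ^ 2) :=
      mul_le_mul_of_nonneg_left key2 (le_of_lt (mul_pos hD₁p hD₂p))
    have hfinal : (1 - ρ₀ ^ 2) * (1 - ρ₁ * ρ₂) ^ 2 * (N₀ ^ 2 * (N₁ ^ 2 * N₂ ^ 2))
        ≤ (1 - ρ₁ ^ 2) * (1 - ρ₂ ^ 2) * (N₀ ^ 2 * (N₁ ^ 2 * N₂ ^ 2)) := by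
      rw [e1, e2]; exact e3
    exact le_of_mul_le_mul_right hfinal hP
  have hfin : (ρ₁ - ρ₂) ^ 2 ≤ (ρ₀ * (1 - ρ₁ * ρ₂)) ^ 2 := by
    have expand : (ρ₀ * (1 - ρ₁ * ρ₂)) ^ 2 - (ρ₁ - ρ₂) ^ 2
        = (1 - ρ₁ ^ 2) * (1 - ρ₂ ^ 2) - (1 - ρ₀ ^ 2) * (1 - ρ₁ * ρ₂) ^ 2 := by ring
    linarith [key3, expand]
  have h := Real.sqrt_le_sqrt hfin
  rwa [Real.sqrt_sq_eq_abs, Real.sqrt_sq (by positivity)] at h
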